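/- Let Φ=(f_1,…,f_n) be a polynomial automorphism of K^n, with deg_1 the standard homogeneous degree. Then the ideal of relations I equals (0) if and only if Φ is affine, i.e. deg_1(f_i) = 1 for all i = 1,…,n. -/

import Mathlib

open MvPolynomial

/-- Leading term of a polynomial with respect to the standard homogeneous degree. -/
noncomputable def ltStd {K : Type*} [CommSemiring K] {n : ℕ}
    (p : MvPolynomial (Fin n) K) : MvPolynomial (Fin n) K :=
  homogeneousComponent p.totalDegree p

/-- The ideal of relations between the leading terms (for the standard degree) of the
components of an automorphism. -/
noncomputable def relIdealStd {K : Type*} [CommRing K] {n : ℕ}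
    (f : Fin n → MvPolynomial (Fin n) K) : Ideal (MvPolynomial (Fin n) K) :=
  RingHom.ker
    (aeval (fun i => ltStd (f i)) : MvPolynomial (Fin n) K →ₐ[K] MvPolynomial (Fin n) K)

namespace Stmt9Aux
open Finsupp
variable {K : Type*} [CommRing K] {n : ℕ}

/-- All monomials of `p` have degree `< m`. -/
def Low (m : ℕ) (p : MvPolynomial (Fin n) K) : Prop :=
  ∀ s : Fin n →₀ ℕ, m ≤ s.degree → coeff s p = 0

lemma sum_eq_degree (s : Fin n →₀ ℕ) : (s.sum fun _ e => e) = s.degree := rfl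

lemma Low.mono {m m' : ℕ} {p : MvPolynomial (Fin n) K} (h : Low m p) (hm : m ≤ m') :
    Low m' p := fun s hs => h s (hm.trans hs)

lemma low_zero (m : ℕ) : Low m (0 : MvPolynomial (Fin n) K) := by
  intro s _; simp

lemma low_of_totalDegree_lt {m : ℕ} {p : MvPolynomial (Fin n) K}
    (h : p.totalDegree < m) : Low m p := by
  intro s hs
  apply coeff_eq_zero_of_totalDegree_lt
  calc p.totalDegree < m := h
    _ ≤ s.degree := hs
    _ = ∑ i ∈ s.support, s i := rfl

lemma Low.add {m : ℕ} {p q : MvPolynomial (Fin n) K} (hp : Low m p) (hq : Low m q) :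
    Low m (p + q) := by
  intro s hs; simp [coeff_add, hp s hs, hq s hs]

lemma Low.sum {m : ℕ} {ι : Type*} (t : Finset ι) (g : ι → MvPolynomial (Fin n) K)
    (h : ∀ i ∈ t, Low m (g i)) : Low m (∑ i ∈ t, g i) := by
  intro s hs
  rw [coeff_sum]
  exact Finset.sum_eq_zero fun i hi => h i hi s hs

lemma Low.mul_right {a b : ℕ} {p q : MvPolynomial (Fin n) K} (hp : Low a p)
    (hq : q.totalDegree ≤ b) : Low (a + b) (p * q) := by
  intro s hs
  rw [coeff_mul]
  apply Finset.sum_eq_zero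
  rintro ⟨u, v⟩ huv
  rw [Finset.HasAntidiagonal.mem_antidiagonal] at huv
  by_cases hu : coeff u p = 0
  · simp [hu]
  by_cases hv : coeff v q = 0
  · simp [hv]
  exfalso
  have h1 : u.degree < a := lt_of_not_ge fun h => hu (hp u h)
  have h2 : v.degree ≤ b := by
    have := le_totalDegree (p := q) (s := v) (by simpa using hv)
    rw [sum_eq_degree] at this
    exact this.trans hq
  have h3 : (u + v).degree = u.degree + v.degree := by
    simp only [degree_eq_weight_one, map_add]
  have hs' : a + b ≤ u.degree + v.degree := by
    rw [← h3]; rw [← huv] at hs; exact hs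
  omega

lemma Low.mul_left {a b : ℕ} {p q : MvPolynomial (Fin n) K} (hp : p.totalDegree ≤ a)
    (hq : Low b q) : Low (a + b) (p * q) := by
  rw [mul_comm, add_comm]
  exact hq.mul_right hp

lemma low_pow {d : ℕ} {p q : MvPolynomial (Fin n) K} (h : Low d (p - q))
    (hp : p.totalDegree ≤ d) (hq : q.totalDegree ≤ d) (a : ℕ) :
    Low (a * d) (p ^ a - q ^ a) := by
  induction a with
  | zero => simpa using low_zero 0
  | succ a ih =>
    have key : p ^ (a + 1) - q ^ (a + 1) = p * (p ^ a - q ^ a) + (p - q) * q ^ a := by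
      ring
    rw [key]
    have h1 : Low (a * d + d) (p * (p ^ a - q ^ a)) := Low.mul_left hp ih |>.mono (by omega)
    have h2 : Low (d + a * d) ((p - q) * q ^ a) :=
      h.mul_right ((totalDegree_pow q a).trans (by exact Nat.mul_le_mul_left a hq))
    have he : (a + 1) * d = a * d + d := by ring
    rw [he]
    exact h1.add (h2.mono (by omega))

lemma low_sub_ltStd (p : MvPolynomial (Fin n) K) : Low p.totalDegree (p - ltStd p) := by
  intro s hs
  rw [coeff_sub, ltStd, coeff_homogeneousComponent]
  rcases eq_or_lt_of_le hs with h | h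
  · rw [if_pos h.symm, sub_self]
  · rw [if_neg (by omega), sub_zero]
    exact coeff_eq_zero_of_totalDegree_lt h

lemma totalDegree_ltStd_le (p : MvPolynomial (Fin n) K) : (ltStd p).totalDegree ≤ p.totalDegree := by
  classical
  apply Finset.sup_le
  intro s hs
  rw [sum_eq_degree]
  rw [MvPolynomial.mem_support_iff, ltStd, coeff_homogeneousComponent] at hs
  split_ifs at hs with h
  · rw [← h]
  · simp at hs

lemma ltStd_isHomogeneous (p : MvPolynomial (Fin n) K) :
    (ltStd p).IsHomogeneous p.totalDegree :=
  homogeneousComponent_isHomogeneous _ _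

lemma low_prod (f : Fin n → MvPolynomial (Fin n) K) (s : Fin n →₀ ℕ) (t : Finset (Fin n)) :
    Low (∑ i ∈ t, s i * (f i).totalDegree)
      ((∏ i ∈ t, f i ^ s i) - ∏ i ∈ t, (ltStd (f i)) ^ s i) := by
  classical
  induction t using Finset.induction with
  | empty => simpa using low_zero 0
  | @insert j t hj ih =>
    rw [Finset.prod_insert hj, Finset.prod_insert hj, Finset.sum_insert hj]
    have key : f j ^ s j * ∏ i ∈ t, f i ^ s i - ltStd (f j) ^ s j * ∏ i ∈ t, ltStd (f i) ^ s i
        = f j ^ s j * ((∏ i ∈ t, f i ^ s i) - ∏ i ∈ t, (ltStd (f i)) ^ s i)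
          + (f j ^ s j - ltStd (f j) ^ s j) * ∏ i ∈ t, ltStd (f i) ^ s i := by
      ring
    rw [key]
    have hb1 : (f j ^ s j).totalDegree ≤ s j * (f j).totalDegree :=
      (totalDegree_pow _ _).trans le_rfl
    have hb2 : (∏ i ∈ t, (ltStd (f i)) ^ s i).totalDegree ≤ ∑ i ∈ t, s i * (f i).totalDegree := by
      refine (totalDegree_finset_prod _ _).trans (Finset.sum_le_sum fun i _ => ?_)
      exact (totalDegree_pow _ _).trans (Nat.mul_le_mul_left _ (totalDegree_ltStd_le _))
    have h1 := Low.mul_left hb1 ih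
    have h2 := (low_pow (low_sub_ltStd (f j)) le_rfl (totalDegree_ltStd_le _) (s j)).mul_right hb2
    exact h1.add h2

lemma weight_eq_sum_univ (w : Fin n → ℕ) (s : Fin n →₀ ℕ) :
    weight w s = ∑ i, s i * w i := by
  rw [weight_apply]
  rw [Finsupp.sum_fintype]
  · simp [mul_comm]
  · intro i; simp

lemma aeval_monomial_eq (f : Fin n → MvPolynomial (Fin n) K) (s : Fin n →₀ ℕ) (c : K) :
    aeval f (monomial s c) = C c * ∏ i, f i ^ s i := by
  rw [aeval_monomial]
  congr 1
  rw [Finsupp.prod_fintype]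
  intro i; simp

lemma aeval_isHomogeneous (h : Fin n → MvPolynomial (Fin n) K) (w : Fin n → ℕ)
    (hh : ∀ i, (h i).IsHomogeneous (w i)) {Q : MvPolynomial (Fin n) K} {M : ℕ}
    (hQ : Q.IsWeightedHomogeneous w M) : (aeval h Q).IsHomogeneous M := by
  classical
  rw [Q.as_sum, map_sum]
  apply IsHomogeneous.sum
  intro s hs
  rw [aeval_monomial_eq]
  have hw : weight w s = M := hQ (MvPolynomial.mem_support_iff.mp hs)
  have : (∏ i, h i ^ s i).IsHomogeneous M := by
    rw [← hw, weight_eq_sum_univ]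
    exact IsHomogeneous.prod _ _ _ fun i _ => (mul_comm (w i) (s i)) ▸ (hh i).pow (s i)
  simpa using (isHomogeneous_C (Fin n) (coeff s Q)).mul this

lemma hc_of_isHomogeneous {p : MvPolynomial (Fin n) K} {m : ℕ} (hp : p.IsHomogeneous m) :
    homogeneousComponent m p = p := by
  ext s
  rw [coeff_homogeneousComponent]
  split_ifs with h
  · rfl
  · exact (hp.coeff_eq_zero h).symm

lemma hc_of_low {p : MvPolynomial (Fin n) K} {m : ℕ} (hp : Low m p) :
    homogeneousComponent m p = 0 := by
  ext s
  rw [coeff_homogeneousComponent]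
  split_ifs with h
  · simpa using hp s h.ge
  · simp

lemma key (f : Fin n → MvPolynomial (Fin n) K) (P : MvPolynomial (Fin n) K) :
    homogeneousComponent
        (weightedTotalDegree (fun i => (f i).totalDegree) P) (aeval f P) =
      aeval (fun i => ltStd (f i))
        (weightedHomogeneousComponent (fun i => (f i).totalDegree)
          (weightedTotalDegree (fun i => (f i).totalDegree) P) P) := by
  classical
  set w : Fin n → ℕ := fun i => (f i).totalDegree with hw
  set M : ℕ := weightedTotalDegree w P with hM
  set h : Fin n → MvPolynomial (Fin n) K := fun i => ltStd (f i) with hh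
  set A : MvPolynomial (Fin n) K := aeval h (weightedHomogeneousComponent w M P) with hA
  have hAhom : A.IsHomogeneous M :=
    aeval_isHomogeneous h w (fun i => ltStd_isHomogeneous (f i))
      (weightedHomogeneousComponent_isWeightedHomogeneous M P)
  have hfP : aeval f P = ∑ s ∈ P.support, C (coeff s P) * ∏ i, f i ^ s i := by
    conv_lhs => rw [P.as_sum]
    rw [map_sum]
    exact Finset.sum_congr rfl fun s _ => aeval_monomial_eq f s _
  have hAeq : A = ∑ s ∈ P.support with weight w s = M, C (coeff s P) * ∏ i, h i ^ s i := by
    rw [hA, weightedHomogeneousComponent_apply, map_sum]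
    exact Finset.sum_congr rfl fun s _ => aeval_monomial_eq h s _
  have hE : Low M (aeval f P - A) := by
    rw [hfP, hAeq,
      ← Finset.sum_filter_add_sum_filter_not P.support (fun s => weight w s = M)]
    have heq : (∑ s ∈ P.support with weight w s = M, C (coeff s P) * ∏ i, f i ^ s i) +
          (∑ s ∈ P.support with ¬ weight w s = M, C (coeff s P) * ∏ i, f i ^ s i) -
          ∑ s ∈ P.support with weight w s = M, C (coeff s P) * ∏ i, h i ^ s i =
        (∑ s ∈ P.support with weight w s = M,
          C (coeff s P) * ((∏ i, f i ^ s i) - ∏ i, h i ^ s i)) +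
          ∑ s ∈ P.support with ¬ weight w s = M, C (coeff s P) * ∏ i, f i ^ s i := by
      rw [add_sub_right_comm]
      congr 1
      rw [← Finset.sum_sub_distrib]
      exact Finset.sum_congr rfl fun s _ => by ring
    rw [heq]
    apply Low.add
    · apply Low.sum
      intro s hs
      rw [Finset.mem_filter] at hs
      have := low_prod f s Finset.univ
      rw [show (∑ i ∈ Finset.univ, s i * (f i).totalDegree) = weight w s from
        (weight_eq_sum_univ w s).symm, hs.2] at this
      have h0 := Low.mul_left (a := 0) (p := C (coeff s P)) (by simp [totalDegree_C]) this
      simpa using h0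
    · apply Low.sum
      intro s hs
      rw [Finset.mem_filter] at hs
      apply low_of_totalDegree_lt
      have h1 : (C (coeff s P) * ∏ i, f i ^ s i).totalDegree ≤ weight w s := by
        refine (totalDegree_mul _ _).trans ?_
        rw [totalDegree_C, zero_add, weight_eq_sum_univ]
        refine (totalDegree_finset_prod _ _).trans (Finset.sum_le_sum fun i _ => ?_)
        exact (totalDegree_pow _ _).trans le_rfl
      have h2 : weight w s ≤ M := le_weightedTotalDegree w hs.1
      exact lt_of_le_of_lt h1 (lt_of_le_of_ne h2 hs.2)
  have hsplit : aeval f P = (aeval f P - A) + A := by ring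
  rw [hsplit, map_add, hc_of_low hE, hc_of_isHomogeneous hAhom, zero_add]

lemma wtd_le_totalDegree_aeval {f : Fin n → MvPolynomial (Fin n) K}
    (inj : Function.Injective
      ⇑(aeval (fun i => ltStd (f i)) : MvPolynomial (Fin n) K →ₐ[K] MvPolynomial (Fin n) K))
    {P : MvPolynomial (Fin n) K} (hP : P ≠ 0) :
    weightedTotalDegree (fun i => (f i).totalDegree) P ≤ (aeval f P).totalDegree := by
  classical
  set w : Fin n → ℕ := fun i => (f i).totalDegree with hw
  set M : ℕ := weightedTotalDegree w P with hM
  have hsupp : P.support.Nonempty := by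
    rw [Finset.nonempty_iff_ne_empty]
    intro hc
    exact hP (MvPolynomial.support_eq_empty.mp hc)
  obtain ⟨s, hs, hseq⟩ := Finset.exists_mem_eq_sup P.support hsupp (fun s => weight w s)
  have hwhc : weightedHomogeneousComponent w M P ≠ 0 := by
    intro hz
    have hM' : M = weight w s := hseq
    have := coeff_weightedHomogeneousComponent (w := w) M P s
    rw [hz, coeff_zero, if_pos hM'.symm] at this
    exact MvPolynomial.mem_support_iff.mp hs this.symm
  have hne : aeval (fun i => ltStd (f i)) (weightedHomogeneousComponent w M P) ≠ 0 := by
    intro hz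
    exact hwhc (inj (by rw [hz, map_zero]))
  have hhc : homogeneousComponent M (aeval f P) ≠ 0 := by
    rw [key f P]
    exact hne
  by_contra hlt
  exact hhc (homogeneousComponent_eq_zero _ _ (lt_of_not_ge hlt))

lemma one_le_totalDegree {f : Fin n → MvPolynomial (Fin n) K} [Nontrivial K]
    (inj : Function.Injective
      ⇑(aeval (fun i => ltStd (f i)) : MvPolynomial (Fin n) K →ₐ[K] MvPolynomial (Fin n) K))
    (i : Fin n) : 1 ≤ (f i).totalDegree := by
  by_contra hlt
  have h0 : (f i).totalDegree = 0 := by omega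
  have hlt0 : ltStd (f i) = C (coeff 0 (f i)) := by
    rw [ltStd, h0, homogeneousComponent_zero]
  have hker : aeval (fun i => ltStd (f i)) (X i - C (coeff 0 (f i))
      : MvPolynomial (Fin n) K) = 0 := by
    rw [map_sub, aeval_X, aeval_C, hlt0]
    simp [algebraMap_eq]
  have := inj (a₁ := X i - C (coeff 0 (f i))) (a₂ := 0) (by rw [hker, map_zero])
  have hco := congrArg (coeff (Finsupp.single i 1)) this
  rw [coeff_sub, coeff_X, coeff_C] at hco
  have hne0 : ¬ (0 : Fin n →₀ ℕ) = Finsupp.single i 1 := by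
    intro hc
    have h2 := congrArg (fun u : Fin n →₀ ℕ => u i) hc
    simp at h2
  rw [if_neg hne0] at hco
  simp at hco

lemma degree_one_classify {s : Fin n →₀ ℕ} (h : s.degree = 1) :
    ∃ j, s = Finsupp.single j 1 := by
  classical
  have hne : s.support.Nonempty := by
    rw [Finset.nonempty_iff_ne_empty]
    intro hc
    rw [Finsupp.support_eq_empty.mp hc] at h
    simp at h
  obtain ⟨j, hj⟩ := hne
  refine ⟨j, ?_⟩
  have hj1 : s j = 1 := by
    have h1 : s j ≤ 1 := h ▸ Finsupp.le_degree j s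
    have h2 : s j ≠ 0 := Finsupp.mem_support_iff.mp hj
    omega
  have hsub : s.support ⊆ {j} := by
    intro k hk
    rw [Finset.mem_singleton]
    by_contra hkj
    have hpair : ({j, k} : Finset (Fin n)) ⊆ s.support := by
      intro x hx
      rw [Finset.mem_insert, Finset.mem_singleton] at hx
      rcases hx with rfl | rfl
      · exact hj
      · exact hk
    have := Finset.sum_le_sum_of_subset (f := (s : Fin n → ℕ)) hpair
    rw [Finset.sum_pair (Ne.symm hkj)] at this
    have hk1 : s k ≠ 0 := Finsupp.mem_support_iff.mp hk
    rw [Finsupp.degree_apply] at h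
    omega
  ext k
  rcases eq_or_ne k j with rfl | hkj
  · simp [hj1]
  · rw [Finsupp.single_eq_of_ne' (Ne.symm hkj)]
    by_contra hk
    exact hkj (Finset.mem_singleton.mp (hsub (Finsupp.mem_support_iff.mpr hk)))

lemma degree_single_one (j : Fin n) : (Finsupp.single j 1 : Fin n →₀ ℕ).degree = 1 := by
  classical
  rw [Finsupp.degree_apply, Finsupp.support_single_ne_zero j one_ne_zero]
  simp

lemma eq_affine_of_totalDegree_le_one {p : MvPolynomial (Fin n) K} (hp : p.totalDegree ≤ 1) :
    p = C (coeff 0 p) + ∑ j, C (coeff (Finsupp.single j 1) p) * X j := by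
  classical
  ext t
  rw [coeff_add, coeff_C, coeff_sum]
  have hterm : ∀ j, coeff t (C (coeff (Finsupp.single j 1) p) * X j) =
      if Finsupp.single j 1 = t then coeff (Finsupp.single j 1) p else 0 := by
    intro j
    rw [coeff_C_mul, coeff_X']
    split_ifs <;> simp
  simp only [hterm]
  rcases Nat.lt_or_ge t.degree 2 with hd | hd
  · interval_cases h : t.degree
    · have ht : t = 0 := (Finsupp.degree_eq_zero_iff t).mp h
      subst ht
      rw [if_pos rfl, Finset.sum_eq_zero, add_zero]
      intro j _
      rw [if_neg]
      intro hc
      have := congrArg Finsupp.degree hc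
      rw [degree_single_one] at this
      simp at this
    · obtain ⟨j, rfl⟩ := degree_one_classify h
      rw [if_neg, Finset.sum_eq_single j, if_pos rfl, zero_add]
      · intro k _ hkj
        rw [if_neg]
        intro hc
        apply hkj
        have h2 := congrArg (fun u : Fin n →₀ ℕ => u j) hc
        simpa [Finsupp.single_apply] using h2
      · intro hj; exact absurd (Finset.mem_univ j) hj
      · intro hc
        have := congrArg Finsupp.degree hc
        rw [degree_single_one] at this
        simp at this
  · have hz : coeff t p = 0 := by
      apply coeff_eq_zero_of_totalDegree_lt
      have hd' : 2 ≤ ∑ i ∈ t.support, t i := hd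
      omega
    rw [hz, if_neg, Finset.sum_eq_zero, add_zero]
    · intro j _
      rw [if_neg]
      intro hc
      have := congrArg Finsupp.degree hc
      rw [degree_single_one] at this
      omega
    · intro hc
      have := congrArg Finsupp.degree hc
      rw [← hc] at hd
      simp [map_zero] at hd

lemma degree_le_weight {w : Fin n → ℕ} (hw : ∀ i, 1 ≤ w i) (s : Fin n →₀ ℕ) :
    s.degree ≤ weight w s := by
  rw [weight_eq_sum_univ, Finsupp.degree]
  calc ∑ i ∈ s.support, s i ≤ ∑ i, s i :=
        Finset.sum_le_sum_of_subset (Finset.subset_univ _)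
    _ ≤ ∑ i, s i * w i := Finset.sum_le_sum fun i _ => Nat.le_mul_of_pos_right _ (hw i)

lemma totalDegree_le_of_weight {w : Fin n → ℕ} (hw : ∀ i, 1 ≤ w i) {p : MvPolynomial (Fin n) K}
    {m : ℕ} (h : weightedTotalDegree w p ≤ m) : p.totalDegree ≤ m := by
  apply Finset.sup_le
  intro s hs
  rw [sum_eq_degree]
  exact (degree_le_weight hw s).trans ((le_weightedTotalDegree w hs).trans h)
end Stmt9Aux

section MainFwd
variable {K : Type*} [Field K] {n : ℕ}
open Stmt9Aux

lemma swap_sum (c : Fin n → K) (M : Fin n → Fin n → K) (v : Fin n → MvPolynomial (Fin n) K) :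
    (∑ i, C (c i) * ∑ j, C (M i j) * v j) = ∑ j, C (∑ i, c i * M i j) * v j := by
  simp_rw [Finset.mul_sum]
  rw [Finset.sum_comm]
  apply Finset.sum_congr rfl
  intro j _
  rw [map_sum, Finset.sum_mul]
  apply Finset.sum_congr rfl
  intro i _
  rw [map_mul, mul_assoc]

theorem fwd (f : Fin n → MvPolynomial (Fin n) K)
    (hf : Function.Bijective
      ⇑(aeval f : MvPolynomial (Fin n) K →ₐ[K] MvPolynomial (Fin n) K))
    (inj : Function.Injective
      ⇑(aeval (fun i => ltStd (f i)) : MvPolynomial (Fin n) K →ₐ[K] MvPolynomial (Fin n) K))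
    (i : Fin n) : (f i).totalDegree = 1 := by
  classical
  set w : Fin n → ℕ := fun i => (f i).totalDegree with hw
  have hd1 : ∀ j, 1 ≤ w j := fun j => one_le_totalDegree inj j
  set σe : MvPolynomial (Fin n) K ≃ₐ[K] MvPolynomial (Fin n) K :=
    AlgEquiv.ofBijective (aeval f) hf with hσe
  set g : Fin n → MvPolynomial (Fin n) K := fun i => σe.symm (X i) with hg
  have hcoe : ⇑σe = ⇑(aeval f : MvPolynomial (Fin n) K →ₐ[K] MvPolynomial (Fin n) K) := rfl
  have hgi : ∀ i, aeval f (g i) = X i := by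
    intro i
    rw [hg, ← hcoe]
    exact σe.apply_symm_apply (X i)
  have hgne : ∀ i, g i ≠ 0 := by
    intro i hz
    have := hgi i
    rw [hz, map_zero] at this
    exact X_ne_zero i this.symm
  have hgdeg : ∀ i, (g i).totalDegree ≤ 1 := by
    intro i
    apply totalDegree_le_of_weight hd1
    have := wtd_le_totalDegree_aeval inj (hgne i)
    rwa [hgi i, totalDegree_X] at this
  set b : Fin n → K := fun i => coeff 0 (g i) with hb
  set A : Matrix (Fin n) (Fin n) K := Matrix.of fun i j => coeff (Finsupp.single j 1) (g i)
    with hA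
  have hEq : ∀ i, (∑ j, C (A i j) * f j) = X i - C (b i) := by
    intro i
    have h1 := congrArg (aeval f) (eq_affine_of_totalDegree_le_one (hgdeg i))
    rw [hgi i, map_add, map_sum] at h1
    simp only [map_mul, aeval_C, aeval_X, algebraMap_eq] at h1
    have hAa : ∀ j, A i j = coeff (Finsupp.single j 1) (g i) := fun j => rfl
    simp only [hAa]
    linear_combination -h1
  have hne0 : ∀ i0 : Fin n, ¬ (0 : Fin n →₀ ℕ) = Finsupp.single i0 1 := by
    intro i0 hc
    have h2 := congrArg (fun u : Fin n →₀ ℕ => u i0) hc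
    simp at h2
  have hker : ∀ c : Fin n → K, Matrix.vecMul c A = 0 → c = 0 := by
    intro c hc
    have hcj : ∀ j, (∑ i, c i * A i j) = 0 := by
      intro j
      have := congrFun hc j
      simpa [Matrix.vecMul, dotProduct] using this
    have hz : (∑ i, C (c i) * (X i - C (b i)) : MvPolynomial (Fin n) K) = 0 := by
      have h3 : (∑ i, C (c i) * (X i - C (b i)) : MvPolynomial (Fin n) K) =
          ∑ i, C (c i) * ∑ j, C (A i j) * f j :=
        Finset.sum_congr rfl fun i _ => by rw [hEq i]
      rw [h3, swap_sum (M := A)]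
      apply Finset.sum_eq_zero
      intro j _
      rw [hcj j]
      simp
    funext i0
    have hco := congrArg (coeff (Finsupp.single i0 1)) hz
    rw [coeff_sum] at hco
    simp only [coeff_C_mul, coeff_sub, coeff_X', coeff_C] at hco
    rw [Finset.sum_eq_single i0] at hco
    · rw [if_pos rfl, if_neg (hne0 i0), coeff_zero] at hco
      simpa using hco
    · intro k _ hk
      rw [if_neg, if_neg (hne0 i0)]
      · ring
      · intro hcs
        apply hk
        have h2 := congrArg (fun u : Fin n →₀ ℕ => u i0) hcs
        simpa [Finsupp.single_apply] using h2
    · intro h; exact absurd (Finset.mem_univ i0) h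
  have hAunit : IsUnit A := by
    rw [← Matrix.vecMul_injective_iff_isUnit]
    have hlin : Function.Injective A.vecMulLinear :=
      LinearMap.ker_eq_bot.mp (LinearMap.ker_eq_bot'.mpr fun c h0 =>
        hker c (by simpa [Matrix.vecMulLinear_apply] using h0))
    simpa [Matrix.coe_vecMulLinear] using hlin
  have hBA : A⁻¹ * A = 1 := Matrix.nonsing_inv_mul A (A.isUnit_iff_isUnit_det.mp hAunit)
  have hfk : ∀ k, f k = ∑ i', C (A⁻¹ k i') * (X i' - C (b i')) := by
    intro k
    have h1 : (∑ i', C (A⁻¹ k i') * (X i' - C (b i')) : MvPolynomial (Fin n) K) =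
        ∑ i', C (A⁻¹ k i') * ∑ j, C (A i' j) * f j :=
      Finset.sum_congr rfl fun i' _ => by rw [hEq i']
    rw [h1, swap_sum (M := A)]
    have h2 : ∀ j, (∑ i', A⁻¹ k i' * A i' j) = (1 : Matrix (Fin n) (Fin n) K) k j := by
      intro j
      rw [← hBA]
      simp [Matrix.mul_apply]
    rw [Finset.sum_congr rfl fun j _ => by rw [h2 j]]
    rw [Finset.sum_eq_single k]
    · rw [Matrix.one_apply_eq]
      simp
    · intro j _ hj
      rw [Matrix.one_apply_ne' hj]
      simp
    · intro h; exact absurd (Finset.mem_univ k) h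
  have hle : (f i).totalDegree ≤ 1 := by
    rw [hfk i]
    refine (totalDegree_finset_sum _ _).trans (Finset.sup_le fun i' _ => ?_)
    refine (totalDegree_mul _ _).trans ?_
    rw [totalDegree_C, zero_add]
    refine (totalDegree_sub _ _).trans ?_
    simp [totalDegree_X, totalDegree_C]
  exact le_antisymm hle (hd1 i)

theorem bwd (f : Fin n → MvPolynomial (Fin n) K)
    (hf : Function.Injective
      ⇑(aeval f : MvPolynomial (Fin n) K →ₐ[K] MvPolynomial (Fin n) K))
    (hdeg : ∀ i, (f i).totalDegree = 1) :
    Function.Injective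
      ⇑(aeval (fun i => ltStd (f i)) : MvPolynomial (Fin n) K →ₐ[K] MvPolynomial (Fin n) K) := by
  classical
  set c : Fin n → K := fun i => coeff 0 (f i) with hc
  have hlt : ∀ i, ltStd (f i) = f i - C (c i) := by
    intro i
    have hs := sum_homogeneousComponent (f i)
    rw [hdeg i] at hs
    rw [ltStd, hdeg i]
    have h2 : ∑ j ∈ Finset.range 2, homogeneousComponent j (f i) = f i := hs
    rw [Finset.sum_range_succ, Finset.sum_range_one, homogeneousComponent_zero] at h2
    linear_combination h2
  set τ : MvPolynomial (Fin n) K →ₐ[K] MvPolynomial (Fin n) K :=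
    aeval (fun i => X i - C (c i)) with hτ
  set ρ : MvPolynomial (Fin n) K →ₐ[K] MvPolynomial (Fin n) K :=
    aeval (fun i => X i + C (c i)) with hρ
  have hρτ : ρ.comp τ = AlgHom.id K (MvPolynomial (Fin n) K) := by
    apply algHom_ext
    intro i
    rw [AlgHom.comp_apply, AlgHom.id_apply, hτ, aeval_X, map_sub, aeval_X, aeval_C,
      algebraMap_eq]
    ring
  have hρτ' : ∀ x, ρ (τ x) = x := fun x => by
    rw [← AlgHom.comp_apply, hρτ, AlgHom.id_apply]
  have hτinj : Function.Injective ⇑τ := fun a b hab => by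
    rw [← hρτ' a, ← hρτ' b, hab]
  have hcomp : ∀ x, aeval f (τ x) =
      aeval (fun i => ltStd (f i)) x := by
    have hc2 : (aeval f).comp τ =
        (aeval (fun i => ltStd (f i)) : MvPolynomial (Fin n) K →ₐ[K] MvPolynomial (Fin n) K) := by
      apply algHom_ext
      intro i
      rw [AlgHom.comp_apply, hτ, aeval_X, map_sub, aeval_X, aeval_C, aeval_X, hlt i,
        algebraMap_eq]
    intro x
    rw [← hc2, AlgHom.comp_apply]
  intro a b hab
  apply hτinj
  apply hf
  rw [hcomp a, hcomp b]
  exact hab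

end MainFwd



/-- Corollary: the ideal of relations is zero if and only if the automorphism is
affine, i.e. `deg₁ fᵢ = 1` for all `i`. -/
theorem stmt9 {K : Type*} [Field K] [IsAlgClosed K] [CharZero K]
    {n : ℕ} (f : Fin n → MvPolynomial (Fin n) K)
    (hf : Function.Bijective
      ⇑(aeval f : MvPolynomial (Fin n) K →ₐ[K] MvPolynomial (Fin n) K)) :
    relIdealStd f = ⊥ ↔ ∀ i, (f i).totalDegree = 1 := by
  unfold relIdealStd
  constructor
  · intro hker i
    exact fwd f hf ((RingHom.injective_iff_ker_eq_bot _).mpr hker) i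
  · intro hdeg
    exact (RingHom.injective_iff_ker_eq_bot _).mp (bwd f hf.injective hdeg)
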